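/- For every n ≥ 3 there exists a coloring model on n vertices such that in the induced random graph distribution every unordered pair e of distinct vertices has marginal probability Pr[X_e] ≥ (n−2)·(3n−4−√(5n²−16n+12))/(2(n−1)²), and the sampled graph is disconnected with probability 1. -/

import Mathlib

open scoped Classical

structure ColoringModel (n : ℕ) where
  Ω : Fin n → Type
  fin : ∀ v, Fintype (Ω v)
  p : ∀ v, Ω v → ℝ
  nonneg : ∀ v ω, 0 ≤ p v ω
  sum_one : ∀ v, ∑ ω ∈ @Finset.univ (Ω v) (fin v), p v ω = 1
  f : ∀ u v : Fin n, Ω u → Ω v → Bool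
  symm : ∀ u v x y, f u v x y = f v u y x

def ColoringModel.graph {n : ℕ} (M : ColoringModel n) (ω : ∀ v, M.Ω v) :
    SimpleGraph (Fin n) where
  Adj u v := u ≠ v ∧ M.f u v (ω u) (ω v) = true
  symm := by
    constructor
    rintro u v ⟨h1, h2⟩
    refine ⟨h1.symm, ?_⟩
    rw [M.symm]
    exact h2
  loopless := ⟨fun u h => h.1 rfl⟩

noncomputable def ColoringModel.pr {n : ℕ} (M : ColoringModel n)
    (P : SimpleGraph (Fin n) → Prop) : ℝ :=
  letI := M.fin
  ∑ ω : (∀ v, M.Ω v), if P (M.graph ω) then ∏ v, M.p v (ω v) else 0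

noncomputable def ColoringModel.dist {n : ℕ} (M : ColoringModel n)
    (G : SimpleGraph (Fin n)) : ℝ :=
  M.pr (fun H => H = G)

namespace CMAux

noncomputable def hh (n : ℕ) : ℝ :=
  (Real.sqrt (5 * (n : ℝ) ^ 2 - 16 * n + 12) - ((n : ℝ) - 2)) / (2 * ((n : ℝ) - 1))

variable {n : ℕ}

lemma cast3 (hn : 3 ≤ n) : (3 : ℝ) ≤ (n : ℝ) := by exact_mod_cast hn

lemma D_nonneg (hn : 3 ≤ n) : 0 ≤ 5 * (n : ℝ) ^ 2 - 16 * n + 12 := by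
  have := cast3 hn; nlinarith

lemma sqrtD_sq (hn : 3 ≤ n) :
    Real.sqrt (5 * (n : ℝ) ^ 2 - 16 * n + 12) ^ 2 = 5 * (n : ℝ) ^ 2 - 16 * n + 12 :=
  Real.sq_sqrt (D_nonneg hn)

lemma sqrtD_lb (hn : 3 ≤ n) : (n : ℝ) - 2 ≤ Real.sqrt (5 * (n : ℝ) ^ 2 - 16 * n + 12) := by
  have h3 := cast3 hn
  have h1 : ((n : ℝ) - 2) ^ 2 ≤ 5 * (n : ℝ) ^ 2 - 16 * n + 12 := by nlinarith
  calc (n : ℝ) - 2 = Real.sqrt (((n : ℝ) - 2) ^ 2) := by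
        rw [Real.sqrt_sq (by linarith)]
    _ ≤ _ := Real.sqrt_le_sqrt h1

lemma sqrtD_ub (hn : 3 ≤ n) : Real.sqrt (5 * (n : ℝ) ^ 2 - 16 * n + 12) ≤ 3 * (n : ℝ) - 4 := by
  have h3 := cast3 hn
  have h1 : 5 * (n : ℝ) ^ 2 - 16 * n + 12 ≤ (3 * (n : ℝ) - 4) ^ 2 := by nlinarith
  calc Real.sqrt (5 * (n : ℝ) ^ 2 - 16 * n + 12) ≤ Real.sqrt ((3 * (n : ℝ) - 4) ^ 2) :=
        Real.sqrt_le_sqrt h1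
    _ = 3 * (n : ℝ) - 4 := Real.sqrt_sq (by linarith)

lemma hh_nonneg (hn : 3 ≤ n) : 0 ≤ hh n := by
  have h3 := cast3 hn
  have := sqrtD_lb hn
  unfold hh
  apply div_nonneg (by linarith) (by linarith)

lemma hh_le_one (hn : 3 ≤ n) : hh n ≤ 1 := by
  have h3 := cast3 hn
  have := sqrtD_ub hn
  unfold hh
  rw [div_le_one (by linarith)]
  linarith

/-- the vertex distribution -/
noncomputable def pfun (n : ℕ) : Fin n → Fin n → ℝ := fun v c =>
  if (v : ℕ) = 0 then (if (c : ℕ) = 0 then 0 else 1 / ((n : ℝ) - 1))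
  else (if (c : ℕ) = 0 then hh n else if (c : ℕ) = 1 then 1 - hh n else 0)

lemma pfun_nonneg (hn : 3 ≤ n) : ∀ v c, 0 ≤ pfun n v c := by
  intro v c
  have h3 := cast3 hn
  have h0 := hh_nonneg hn
  have h1 := hh_le_one hn
  have hinv : 0 ≤ 1 / ((n : ℝ) - 1) := by
    apply div_nonneg (by norm_num) (by linarith)
  unfold pfun
  split_ifs <;> linarith

lemma pfun_sum (hn : 3 ≤ n) : ∀ v, ∑ c, pfun n v c = 1 := by
  intro v
  have h3 := cast3 hn
  have hz : (0 : ℕ) < n := by omega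
  have ho : (1 : ℕ) < n := by omega
  set z : Fin n := ⟨0, hz⟩ with hzdef
  set o : Fin n := ⟨1, ho⟩ with hodef
  have hne : ((n : ℝ) - 1) ≠ 0 := by linarith
  have hcz : ∀ c : Fin n, (c = z) ↔ (c : ℕ) = 0 := by
    intro c
    constructor
    · intro h; rw [h]
    · intro h; apply Fin.ext; simpa using h
  have hco : ∀ c : Fin n, (c = o) ↔ (c : ℕ) = 1 := by
    intro c
    constructor
    · intro h; rw [h]
    · intro h; apply Fin.ext; simpa using h
  by_cases hv : (v : ℕ) = 0
  · have step : ∀ c : Fin n, pfun n v c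
        = 1 / ((n : ℝ) - 1) - (if c = z then 1 / ((n : ℝ) - 1) else 0) := by
      intro c
      unfold pfun
      rw [if_pos hv]
      by_cases hc : (c : ℕ) = 0
      · rw [if_pos hc, if_pos ((hcz c).mpr hc)]; ring
      · rw [if_neg hc, if_neg (fun h => hc ((hcz c).mp h))]; ring
    rw [Finset.sum_congr rfl (fun c _ => step c)]
    rw [Finset.sum_sub_distrib, Finset.sum_const, Finset.card_univ, Fintype.card_fin,
      Finset.sum_ite_eq' Finset.univ z, if_pos (Finset.mem_univ z)]
    rw [nsmul_eq_mul]
    field_simp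
  · have step : ∀ c : Fin n, pfun n v c
        = (if c = z then hh n else 0) + (if c = o then 1 - hh n else 0) := by
      intro c
      unfold pfun
      rw [if_neg hv]
      by_cases hc0 : (c : ℕ) = 0
      · have h1 : ¬ (c : ℕ) = 1 := by omega
        rw [if_pos hc0, if_pos ((hcz c).mpr hc0), if_neg (fun h => h1 ((hco c).mp h))]
        ring
      · by_cases hc1 : (c : ℕ) = 1
        · rw [if_neg hc0, if_pos hc1, if_neg (fun h => hc0 ((hcz c).mp h)),
            if_pos ((hco c).mpr hc1)]
          ring
        · rw [if_neg hc0, if_neg hc1, if_neg (fun h => hc0 ((hcz c).mp h)),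
            if_neg (fun h => hc1 ((hco c).mp h))]
          ring
    rw [Finset.sum_congr rfl (fun c _ => step c)]
    rw [Finset.sum_add_distrib,
      Finset.sum_ite_eq' Finset.univ z, if_pos (Finset.mem_univ z),
      Finset.sum_ite_eq' Finset.univ o, if_pos (Finset.mem_univ o)]
    ring

/-- the edge predicate -/
abbrev Q (n : ℕ) (u v a b : Fin n) : Prop :=
  ((u : ℕ) ≠ 0 ∧ (v : ℕ) ≠ 0 ∧ (a : ℕ) = 0 ∧ (b : ℕ) = 0) ∨
  ((u : ℕ) = 0 ∧ (v : ℕ) ≠ 0 ∧ (b : ℕ) = 1 ∧ a ≠ v) ∨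
  ((v : ℕ) = 0 ∧ (u : ℕ) ≠ 0 ∧ (a : ℕ) = 1 ∧ b ≠ u)

lemma sum_pi_prod (g : Fin n → Fin n → ℝ) :
    ∑ ω : Fin n → Fin n, ∏ t, g t (ω t) = ∏ t, ∑ c, g t c := by
  rw [Finset.prod_univ_sum]
  rw [Fintype.piFinset_univ]

lemma sum_pi_total (hn : 3 ≤ n) :
    ∑ ω : Fin n → Fin n, ∏ t, pfun n t (ω t) = 1 := by
  rw [sum_pi_prod]
  rw [Finset.prod_congr rfl (fun t _ => pfun_sum hn t)]
  simp

lemma sum_pi_rect (hn : 3 ≤ n) (u v : Fin n) (huv : u ≠ v) (A B : Finset (Fin n)) :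
    ∑ ω : Fin n → Fin n, (if ω u ∈ A ∧ ω v ∈ B then ∏ t, pfun n t (ω t) else 0)
      = (∑ a ∈ A, pfun n u a) * (∑ b ∈ B, pfun n v b) := by
  classical
  have hF : ∃ F : Fin n → Fin n → ℝ, F = fun t c =>
      if t = u then (if c ∈ A then pfun n t c else 0)
      else if t = v then (if c ∈ B then pfun n t c else 0)
      else pfun n t c := ⟨_, rfl⟩
  obtain ⟨F, hF⟩ := hF
  have step1 : ∀ ω : Fin n → Fin n,
      (if ω u ∈ A ∧ ω v ∈ B then ∏ t, pfun n t (ω t) else 0) = ∏ t, F t (ω t) := by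
    intro ω
    by_cases hA : ω u ∈ A
    · by_cases hB : ω v ∈ B
      · rw [if_pos ⟨hA, hB⟩]
        refine Finset.prod_congr rfl (fun t _ => ?_)
        rw [hF]
        simp only
        split_ifs with h1 h2 h3 <;> simp_all
      · rw [if_neg (fun h => hB h.2)]
        symm
        apply Finset.prod_eq_zero (Finset.mem_univ v)
        rw [hF]
        simp only
        split_ifs <;> simp_all
    · rw [if_neg (fun h => hA h.1)]
      symm
      apply Finset.prod_eq_zero (Finset.mem_univ u)
      rw [hF]
      simp only
      split_ifs <;> simp_all
  rw [Finset.sum_congr rfl (fun ω _ => step1 ω), sum_pi_prod]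
  have step2 : ∀ t : Fin n, (∑ c, F t c)
      = (if t = u then ∑ a ∈ A, pfun n u a else 1) * (if t = v then ∑ b ∈ B, pfun n v b else 1) := by
    intro t
    by_cases htu : t = u
    · subst htu
      rw [if_pos rfl, if_neg huv, mul_one, hF]
      simp only [eq_self_iff_true, if_true]
      rw [Finset.sum_ite_mem, Finset.univ_inter]
    · by_cases htv : t = v
      · subst htv
        rw [if_neg htu, if_pos rfl, one_mul, hF]
        simp only [if_neg htu, eq_self_iff_true, if_true]
        rw [Finset.sum_ite_mem, Finset.univ_inter]
      · rw [if_neg htu, if_neg htv, mul_one, hF]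
        simp only [if_neg htu, if_neg htv]
        exact pfun_sum hn t
  rw [Finset.prod_congr rfl (fun t _ => step2 t), Finset.prod_mul_distrib,
    Finset.prod_ite_eq' Finset.univ u, Finset.prod_ite_eq' Finset.univ v,
    if_pos (Finset.mem_univ u), if_pos (Finset.mem_univ v)]

noncomputable def model (n : ℕ) (hn : 3 ≤ n) : ColoringModel n where
  Ω _ := Fin n
  fin _ := inferInstance
  p := pfun n
  nonneg := pfun_nonneg hn
  sum_one := pfun_sum hn
  f u v a b := decide (Q n u v a b)
  symm u v x y := by
    apply decide_eq_decide.mpr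
    unfold Q
    tauto

lemma adj_iff (hn : 3 ≤ n) (ω : Fin n → Fin n) (u v : Fin n) :
    ((model n hn).graph ω).Adj u v ↔ u ≠ v ∧ Q n u v (ω u) (ω v) := by
  change u ≠ v ∧ decide (Q n u v (ω u) (ω v)) = true ↔ _
  constructor
  · rintro ⟨h1, h2⟩
    exact ⟨h1, of_decide_eq_true h2⟩
  · rintro ⟨h1, h2⟩
    exact ⟨h1, decide_eq_true h2⟩

lemma pr_eq (hn : 3 ≤ n) (P : SimpleGraph (Fin n) → Prop) :
    (model n hn).pr P
      = ∑ ω : Fin n → Fin n, (if P ((model n hn).graph ω) then ∏ t, pfun n t (ω t) else 0) :=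
  rfl

lemma hh_pos (hn : 3 ≤ n) : 0 < hh n := by
  have h3 := cast3 hn
  have hlt : ((n : ℝ) - 2) ^ 2 < 5 * (n : ℝ) ^ 2 - 16 * n + 12 := by nlinarith
  have : (n : ℝ) - 2 < Real.sqrt (5 * (n : ℝ) ^ 2 - 16 * n + 12) := by
    calc (n : ℝ) - 2 = Real.sqrt (((n : ℝ) - 2) ^ 2) := by rw [Real.sqrt_sq (by linarith)]
      _ < _ := Real.sqrt_lt_sqrt (by positivity) hlt
  unfold hh
  apply div_pos (by linarith) (by linarith)

lemma hh_lt_one (hn : 3 ≤ n) : hh n < 1 := by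
  have h3 := cast3 hn
  have hlt : 5 * (n : ℝ) ^ 2 - 16 * n + 12 < (3 * (n : ℝ) - 4) ^ 2 := by nlinarith
  have : Real.sqrt (5 * (n : ℝ) ^ 2 - 16 * n + 12) < 3 * (n : ℝ) - 4 := by
    calc Real.sqrt (5 * (n : ℝ) ^ 2 - 16 * n + 12)
        < Real.sqrt ((3 * (n : ℝ) - 4) ^ 2) := Real.sqrt_lt_sqrt (D_nonneg hn) hlt
      _ = 3 * (n : ℝ) - 4 := Real.sqrt_sq (by linarith)
  unfold hh
  rw [div_lt_one (by linarith)]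
  linarith

lemma disconnected_of_ne (hn : 3 ≤ n) (ω : Fin n → Fin n)
    (hω : ∏ t, pfun n t (ω t) ≠ 0) : ¬ ((model n hn).graph ω).Connected := by
  intro hconn
  have hfac : ∀ t, pfun n t (ω t) ≠ 0 := by
    intro t h0; exact hω (Finset.prod_eq_zero (Finset.mem_univ t) h0)
  have hzlt : (0 : ℕ) < n := by omega
  by_cases hH : ∃ t : Fin n, (t : ℕ) ≠ 0 ∧ (ω t : ℕ) = 0
  · obtain ⟨t, ht0, htH⟩ := hH
    have key : ∀ x y : Fin n, ((model n hn).graph ω).Walk x y →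
        ((x : ℕ) = 0 ∨ (ω x : ℕ) = 1) → ((y : ℕ) = 0 ∨ (ω y : ℕ) = 1) := by
      intro x y w
      induction w with
      | nil => exact id
      | cons hab wbc ih =>
        intro hx
        apply ih
        have hQ := ((adj_iff hn ω _ _).mp hab).2
        rcases hQ with ⟨ha, hb, ha0, hb0⟩ | ⟨ha, hb, hb1, _⟩ | ⟨hb0, ha0, ha1, _⟩
        · rcases hx with h | h
          · exact absurd h ha
          · omega
        · exact Or.inr hb1
        · exact Or.inl hb0
    obtain ⟨w⟩ := hconn.preconnected ⟨0, hzlt⟩ t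
    have := key _ t w (Or.inl rfl)
    rcases this with h | h
    · exact ht0 h
    · omega
  · push_neg at hH
    have hwz : (ω ⟨0, hzlt⟩ : ℕ) ≠ 0 := by
      intro h0
      apply hfac ⟨0, hzlt⟩
      unfold pfun
      rw [if_pos rfl, if_pos h0]
    have hiso : ∀ y, ¬ ((model n hn).graph ω).Adj (ω ⟨0, hzlt⟩) y := by
      intro y hadj
      have hQ := ((adj_iff hn ω _ _).mp hadj).2
      rcases hQ with ⟨h1, h2, h3, _⟩ | ⟨h1, _, _, _⟩ | ⟨h1, h2, h3, h4⟩
      · exact hH _ hwz h3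
      · exact hwz h1
      · have hyz : y = (⟨0, hzlt⟩ : Fin n) := Fin.ext (by simpa using h1)
        apply h4
        rw [hyz]
    have hne : ω ⟨0, hzlt⟩ ≠ (⟨0, hzlt⟩ : Fin n) := by
      intro h
      apply hwz
      rw [h]
    have key2 : ∀ x y : Fin n, ((model n hn).graph ω).Walk x y →
        x = ω ⟨0, hzlt⟩ → y = ω ⟨0, hzlt⟩ := by
      intro x y w
      induction w with
      | nil => exact id
      | cons hab _ ih =>
        intro hx
        exact absurd (hx ▸ hab) (hiso _)
    obtain ⟨walk⟩ := hconn.preconnected (ω ⟨0, hzlt⟩) ⟨0, hzlt⟩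
    exact hne (key2 _ _ walk rfl).symm

lemma bound_eq_hh (hn : 3 ≤ n) :
    ((n : ℝ) - 2) * (3 * (n : ℝ) - 4 - Real.sqrt (5 * (n : ℝ) ^ 2 - 16 * n + 12))
      / (2 * ((n : ℝ) - 1) ^ 2) = hh n * hh n := by
  have h3 := cast3 hn
  have hs2 := sqrtD_sq hn
  have hk : ((n : ℝ) - 1) ≠ 0 := by linarith
  unfold hh
  field_simp
  have e : (n : ℝ) * ((n : ℝ) * 5 - 16) + 12 = 5 * (n : ℝ) ^ 2 - 16 * n + 12 := by ring
  rw [e]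
  nlinarith [hs2]

lemma bound_eq_mix (hn : 3 ≤ n) :
    ((n : ℝ) - 2) * (3 * (n : ℝ) - 4 - Real.sqrt (5 * (n : ℝ) ^ 2 - 16 * n + 12))
      / (2 * ((n : ℝ) - 1) ^ 2) = (1 - 1 / ((n : ℝ) - 1)) * (1 - hh n) := by
  have h3 := cast3 hn
  have hk : ((n : ℝ) - 1) ≠ 0 := by linarith
  unfold hh
  field_simp
  ring

end CMAux

theorem coloring_model_lower_bound (n : ℕ) (hn : 3 ≤ n) :
    ∃ M : ColoringModel n,
      (∀ u v : Fin n, u ≠ v →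
        ((n : ℝ) - 2) * (3 * (n : ℝ) - 4 - Real.sqrt (5 * (n : ℝ) ^ 2 - 16 * n + 12))
            / (2 * ((n : ℝ) - 1) ^ 2)
          ≤ M.pr (fun G => G.Adj u v)) ∧
      M.pr (fun G => ¬ G.Connected) = 1 := by
  classical
  refine ⟨CMAux.model n hn, ?_, ?_⟩
  · intro u v huv
    have h3 := CMAux.cast3 hn
    have hzlt : (0 : ℕ) < n := by omega
    have holt : (1 : ℕ) < n := by omega
    rw [CMAux.pr_eq hn]
    have prnn : ∀ ω : Fin n → Fin n, 0 ≤ ∏ t, CMAux.pfun n t (ω t) :=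
      fun ω => Finset.prod_nonneg (fun t _ => CMAux.pfun_nonneg hn t (ω t))
    have hmono : ∀ A B : Finset (Fin n),
        (∀ a b, a ∈ A → b ∈ B → CMAux.Q n u v a b) →
        (∑ a ∈ A, CMAux.pfun n u a) * (∑ b ∈ B, CMAux.pfun n v b)
          ≤ ∑ ω : Fin n → Fin n,
              (if ((CMAux.model n hn).graph ω).Adj u v then ∏ t, CMAux.pfun n t (ω t) else 0) := by
      intro A B hAB
      rw [← CMAux.sum_pi_rect hn u v huv A B]
      apply Finset.sum_le_sum
      intro ω _
      by_cases hR : ω u ∈ A ∧ ω v ∈ B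
      · rw [if_pos hR, if_pos ((CMAux.adj_iff hn ω u v).mpr ⟨huv, hAB _ _ hR.1 hR.2⟩)]
      · rw [if_neg hR]
        split_ifs with h
        · exact prnn ω
        · exact le_rfl
    by_cases hu : (u : ℕ) = 0
    · by_cases hv : (v : ℕ) = 0
      · exact absurd (Fin.ext (hu.trans hv.symm)) huv
      · have hA : ∑ a ∈ Finset.univ.filter (fun a : Fin n => ¬ a = v), CMAux.pfun n u a
            = 1 - 1 / ((n : ℝ) - 1) := by
          have hsp := Finset.sum_filter_add_sum_filter_not Finset.univ
            (fun a : Fin n => a = v) (CMAux.pfun n u)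
          have h1 : ∑ a ∈ Finset.univ.filter (fun a : Fin n => a = v), CMAux.pfun n u a
              = CMAux.pfun n u v := by
            rw [Finset.filter_eq', if_pos (Finset.mem_univ v), Finset.sum_singleton]
          have h2 : CMAux.pfun n u v = 1 / ((n : ℝ) - 1) := by
            unfold CMAux.pfun; rw [if_pos hu, if_neg hv]
          have h4 := CMAux.pfun_sum hn u
          linarith [hsp]
        have hB : ∑ b ∈ ({⟨1, holt⟩} : Finset (Fin n)), CMAux.pfun n v b
            = 1 - CMAux.hh n := by
          rw [Finset.sum_singleton]
          unfold CMAux.pfun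
          rw [if_neg hv, if_neg (by norm_num), if_pos rfl]
        have hQ : ∀ a b : Fin n, a ∈ Finset.univ.filter (fun a : Fin n => ¬ a = v) →
            b ∈ ({⟨1, holt⟩} : Finset (Fin n)) → CMAux.Q n u v a b := by
          intro a b ha hb
          refine Or.inr (Or.inl ⟨hu, hv, ?_, (Finset.mem_filter.mp ha).2⟩)
          rw [Finset.mem_singleton.mp hb]
        calc ((n : ℝ) - 2) * (3 * (n : ℝ) - 4 - Real.sqrt (5 * (n : ℝ) ^ 2 - 16 * n + 12))
              / (2 * ((n : ℝ) - 1) ^ 2)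
            = (1 - 1 / ((n : ℝ) - 1)) * (1 - CMAux.hh n) := CMAux.bound_eq_mix hn
          _ = (∑ a ∈ Finset.univ.filter (fun a : Fin n => ¬ a = v), CMAux.pfun n u a)
                * (∑ b ∈ ({⟨1, holt⟩} : Finset (Fin n)), CMAux.pfun n v b) := by
              rw [hA, hB]
          _ ≤ _ := hmono _ _ hQ
    · by_cases hv : (v : ℕ) = 0
      · have hB : ∑ b ∈ Finset.univ.filter (fun b : Fin n => ¬ b = u), CMAux.pfun n v b
            = 1 - 1 / ((n : ℝ) - 1) := by
          have hsp := Finset.sum_filter_add_sum_filter_not Finset.univ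
            (fun b : Fin n => b = u) (CMAux.pfun n v)
          have h1 : ∑ b ∈ Finset.univ.filter (fun b : Fin n => b = u), CMAux.pfun n v b
              = CMAux.pfun n v u := by
            rw [Finset.filter_eq', if_pos (Finset.mem_univ u), Finset.sum_singleton]
          have h2 : CMAux.pfun n v u = 1 / ((n : ℝ) - 1) := by
            unfold CMAux.pfun; rw [if_pos hv, if_neg hu]
          have h4 := CMAux.pfun_sum hn v
          linarith [hsp]
        have hA : ∑ a ∈ ({⟨1, holt⟩} : Finset (Fin n)), CMAux.pfun n u a
            = 1 - CMAux.hh n := by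
          rw [Finset.sum_singleton]
          unfold CMAux.pfun
          rw [if_neg hu, if_neg (by norm_num), if_pos rfl]
        have hQ : ∀ a b : Fin n, a ∈ ({⟨1, holt⟩} : Finset (Fin n)) →
            b ∈ Finset.univ.filter (fun b : Fin n => ¬ b = u) → CMAux.Q n u v a b := by
          intro a b ha hb
          refine Or.inr (Or.inr ⟨hv, hu, ?_, (Finset.mem_filter.mp hb).2⟩)
          rw [Finset.mem_singleton.mp ha]
        calc ((n : ℝ) - 2) * (3 * (n : ℝ) - 4 - Real.sqrt (5 * (n : ℝ) ^ 2 - 16 * n + 12))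
              / (2 * ((n : ℝ) - 1) ^ 2)
            = (1 - 1 / ((n : ℝ) - 1)) * (1 - CMAux.hh n) := CMAux.bound_eq_mix hn
          _ = (1 - CMAux.hh n) * (1 - 1 / ((n : ℝ) - 1)) := by ring
          _ = (∑ a ∈ ({⟨1, holt⟩} : Finset (Fin n)), CMAux.pfun n u a)
                * (∑ b ∈ Finset.univ.filter (fun b : Fin n => ¬ b = u), CMAux.pfun n v b) := by
              rw [hA, hB]
          _ ≤ _ := hmono _ _ hQ
      · have hA : ∑ a ∈ ({⟨0, hzlt⟩} : Finset (Fin n)), CMAux.pfun n u a = CMAux.hh n := by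
          rw [Finset.sum_singleton]
          unfold CMAux.pfun
          rw [if_neg hu, if_pos rfl]
        have hB : ∑ b ∈ ({⟨0, hzlt⟩} : Finset (Fin n)), CMAux.pfun n v b = CMAux.hh n := by
          rw [Finset.sum_singleton]
          unfold CMAux.pfun
          rw [if_neg hv, if_pos rfl]
        have hQ : ∀ a b : Fin n, a ∈ ({⟨0, hzlt⟩} : Finset (Fin n)) →
            b ∈ ({⟨0, hzlt⟩} : Finset (Fin n)) → CMAux.Q n u v a b := by
          intro a b ha hb
          refine Or.inl ⟨hu, hv, ?_, ?_⟩
          · rw [Finset.mem_singleton.mp ha]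
          · rw [Finset.mem_singleton.mp hb]
        calc ((n : ℝ) - 2) * (3 * (n : ℝ) - 4 - Real.sqrt (5 * (n : ℝ) ^ 2 - 16 * n + 12))
              / (2 * ((n : ℝ) - 1) ^ 2)
            = CMAux.hh n * CMAux.hh n := CMAux.bound_eq_hh hn
          _ = (∑ a ∈ ({⟨0, hzlt⟩} : Finset (Fin n)), CMAux.pfun n u a)
                * (∑ b ∈ ({⟨0, hzlt⟩} : Finset (Fin n)), CMAux.pfun n v b) := by rw [hA, hB]
          _ ≤ _ := hmono _ _ hQ
  · rw [CMAux.pr_eq hn]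
    refine Eq.trans (Finset.sum_congr rfl ?_) (CMAux.sum_pi_total hn)
    intro ω _
    by_cases hc : ((CMAux.model n hn).graph ω).Connected
    · have h0 : ∏ t, CMAux.pfun n t (ω t) = 0 := by
        by_contra h
        exact CMAux.disconnected_of_ne hn ω h hc
      rw [if_neg (not_not_intro hc), h0]
    · rw [if_pos hc]
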